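/- Let n ≥ k ≥ 1 and let x ∈ ℝⁿ satisfy |supp(x)| < ⌊n/k⌋. Then x is the unique minimizer of the ℓ1 norm over all solutions of the circular box-deconvolution problem: for every x' ∈ ℝⁿ with Bx' = Bx and x' ≠ x, one has ‖x'‖₁ > ‖x‖₁. -/

import Mathlib

/-- Circular convolution with a box of width `k`: `(B x)_i = ∑_{t=0}^{k-1} x_{(i+t) mod n}`. -/
def boxB (n k : ℕ) (x : Fin n → ℝ) : Fin n → ℝ :=
  fun i => ∑ t : Fin k, x ⟨((i : ℕ) + (t : ℕ)) % n, Nat.mod_lt _ i.pos⟩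

/-- If `|supp(x)| < ⌊n/k⌋` then `x` is the unique `ℓ1` minimizer among solutions of
`B x' = B x`: every other solution has strictly larger `ℓ1` norm. -/
theorem boxB_l1_recovery (n k : ℕ) (hk : 1 ≤ k) (hn : k ≤ n)
    (x : Fin n → ℝ)
    (hsupp : (Finset.univ.filter fun j => x j ≠ 0).card < n / k)
    (x' : Fin n → ℝ) (hx' : boxB n k x' = boxB n k x) (hne : x' ≠ x) :
    ∑ j, |x j| < ∑ j, |x' j| := by
  have hn0 : 0 < n := lt_of_lt_of_le hk hn
  haveI : NeZero n := ⟨hn0.ne'⟩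
  set h : Fin n → ℝ := fun j => x' j - x j with hh
  set H : ZMod n → ℝ := fun z => h ⟨z.val, ZMod.val_lt z⟩ with hH
  have hg : ∀ m : ℕ, H (m : ZMod n) = h ⟨m % n, Nat.mod_lt m hn0⟩ := by
    intro m
    simp only [hH]
    congr 1
    exact Fin.ext (by simp [ZMod.val_natCast])
  have hHj : ∀ j : Fin n, H ((j : ℕ) : ZMod n) = h j := by
    intro j
    rw [hg]
    congr 1
    exact Fin.ext (by simp [Nat.mod_eq_of_lt j.isLt])
  -- Claim A : windows of h sum to zero
  have A : ∀ m : ℕ, ∑ t ∈ Finset.range k, H ((m + t : ℕ) : ZMod n) = 0 := by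
    intro m
    have h1 : boxB n k x' ⟨m % n, Nat.mod_lt m hn0⟩ = boxB n k x ⟨m % n, Nat.mod_lt m hn0⟩ :=
      congrFun hx' _
    have h2 : ∑ t : Fin k, h ⟨(m % n + (t : ℕ)) % n, Nat.mod_lt _ hn0⟩ = 0 := by
      simp only [hh, Finset.sum_sub_distrib]
      have e1 : (∑ t : Fin k, x' ⟨(m % n + (t : ℕ)) % n, Nat.mod_lt _ hn0⟩)
          = boxB n k x' ⟨m % n, Nat.mod_lt m hn0⟩ := rfl
      have e2 : (∑ t : Fin k, x ⟨(m % n + (t : ℕ)) % n, Nat.mod_lt _ hn0⟩)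
          = boxB n k x ⟨m % n, Nat.mod_lt m hn0⟩ := rfl
      rw [e1, e2, h1, sub_self]
    calc ∑ t ∈ Finset.range k, H ((m + t : ℕ) : ZMod n)
        = ∑ t ∈ Finset.range k, h ⟨(m % n + t) % n, Nat.mod_lt _ hn0⟩ := by
          refine Finset.sum_congr rfl fun t _ => ?_
          rw [hg]
          congr 1
          exact Fin.ext (by simp [Nat.mod_add_mod])
      _ = ∑ t : Fin k, h ⟨(m % n + (t : ℕ)) % n, Nat.mod_lt _ hn0⟩ :=
          (Fin.sum_univ_eq_sum_range (fun t => h ⟨(m % n + t) % n, Nat.mod_lt _ hn0⟩) k).symm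
      _ = 0 := h2
  -- Claim B : shift by k invariance
  have B : ∀ m : ℕ, H ((m + k : ℕ) : ZMod n) = H (m : ZMod n) := by
    intro m
    have t1 := A m
    have t2 := A (m + 1)
    have t4 : ∑ t ∈ Finset.range k, H ((m + (t + 1) : ℕ) : ZMod n) = 0 := by
      calc ∑ t ∈ Finset.range k, H ((m + (t + 1) : ℕ) : ZMod n)
          = ∑ t ∈ Finset.range k, H ((m + 1 + t : ℕ) : ZMod n) := by
            refine Finset.sum_congr rfl fun t _ => ?_
            congr 2
            omega
        _ = 0 := t2
    have t3 := Finset.sum_range_sub (fun t => H ((m + t : ℕ) : ZMod n)) k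
    rw [Finset.sum_sub_distrib, t4, t1] at t3
    have h5 : H ((m + k : ℕ) : ZMod n) = H ((m + 0 : ℕ) : ZMod n) := by linarith
    simpa using h5
  have Bz : ∀ z : ZMod n, H (z + (k : ℕ)) = H z := by
    intro z
    have hz : ((z.val : ℕ) : ZMod n) = z := ZMod.natCast_rightInverse z
    calc H (z + (k : ℕ)) = H ((z.val + k : ℕ) : ZMod n) := by rw [Nat.cast_add, hz]
      _ = H ((z.val : ℕ) : ZMod n) := B z.val
      _ = H z := by rw [hz]
  set c : ZMod n := ((k : ℕ) : ZMod n) with hc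
  have Bsmul : ∀ (t : ℕ) (z : ZMod n), H (z + t • c) = H z := by
    intro t
    induction t with
    | zero => intro z; simp
    | succ t ih =>
        intro z
        have : z + (t + 1) • c = (z + t • c) + c := by
          rw [succ_nsmul]; ring
        rw [this, Bz (z + t • c), ih z]
  -- total sum is zero
  have Az : ∀ z : ZMod n, ∑ t ∈ Finset.range k, H (z + (t : ℕ)) = 0 := by
    intro z
    have hz : ((z.val : ℕ) : ZMod n) = z := ZMod.natCast_rightInverse z
    calc ∑ t ∈ Finset.range k, H (z + (t : ℕ))
        = ∑ t ∈ Finset.range k, H ((z.val + t : ℕ) : ZMod n) := by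
          refine Finset.sum_congr rfl fun t _ => ?_
          rw [Nat.cast_add, hz]
      _ = 0 := A z.val
  have hS : ∑ z : ZMod n, H z = 0 := by
    have h1 : ∑ z : ZMod n, ∑ t ∈ Finset.range k, H (z + (t : ℕ)) = 0 := by
      simp [Az]
    rw [Finset.sum_comm] at h1
    have h2 : ∀ t : ℕ, ∑ z : ZMod n, H (z + (t : ℕ)) = ∑ z : ZMod n, H z := fun t =>
      Fintype.sum_bijective (· + ((t : ℕ) : ZMod n))
        (Equiv.addRight ((t : ℕ) : ZMod n)).bijective _ _ (fun z => rfl)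
    rw [Finset.sum_congr rfl (fun t _ => h2 t)] at h1
    rw [Finset.sum_const, Finset.card_range] at h1
    have hk' : (k : ℝ) ≠ 0 := by positivity
    have : (k : ℝ) * ∑ z : ZMod n, H z = 0 := by
      rw [← h1]; simp [nsmul_eq_mul]
    rcases mul_eq_zero.mp this with h | h
    · exact absurd h hk'
    · exact h
  -- maximizer
  obtain ⟨z0, -, hz0⟩ := Finset.exists_max_image Finset.univ (fun z => |H z|)
    ⟨0, Finset.mem_univ 0⟩
  set M : ℝ := |H z0| with hM
  have hMpos : 0 < M := by
    have : ∃ j : Fin n, h j ≠ 0 := by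
      by_contra hcon
      push_neg at hcon
      apply hne
      funext j
      have := hcon j
      simp only [hh] at this
      linarith [sub_eq_zero.mp this]
    obtain ⟨j, hj⟩ := this
    have h1 : 0 < |h j| := abs_pos.mpr hj
    have h2 : |h j| ≤ M := by rw [← hHj j]; exact hz0 _ (Finset.mem_univ _)
    linarith
  -- orbit
  set ord : ℕ := addOrderOf c with hordd
  have hord : ord = n / n.gcd k := ZMod.addOrderOf_coe k hn0.ne'
  have hord_ge : n / k ≤ ord := by
    rw [hord]
    exact Nat.div_le_div_left (Nat.gcd_le_right n hk) (Nat.gcd_pos_of_pos_left k hn0)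
  set O : Finset (ZMod n) := (Finset.range ord).image (fun t => z0 + t • c) with hO
  have key : ∀ a b : ℕ, a < ord → b < ord → a ≤ b → z0 + a • c = z0 + b • c → a = b := by
    intro a b ha hb hle hab
    have h0 : a • c = b • c := add_left_cancel hab
    have h1 : (b - a) • c = 0 := by
      rw [sub_nsmul c hle, ← h0]
      simp
    have h2 : ord ∣ (b - a) := addOrderOf_dvd_of_nsmul_eq_zero h1
    have h3 : b - a = 0 := Nat.eq_zero_of_dvd_of_lt h2 (lt_of_le_of_lt (Nat.sub_le b a) hb)
    omega
  have hinj : Set.InjOn (fun t : ℕ => z0 + t • c) ↑(Finset.range ord) := by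
    intro a ha b hb hab
    simp only [Finset.coe_range, Set.mem_Iio] at ha hb
    rcases le_total a b with hle | hle
    · exact key a b ha hb hle hab
    · exact (key b a hb ha hle hab.symm).symm
  have hcardO : O.card = ord := by
    rw [hO, Finset.card_image_of_injOn hinj, Finset.card_range]
  have hconst : ∀ z ∈ O, H z = H z0 := by
    intro z hz
    rw [hO, Finset.mem_image] at hz
    obtain ⟨t, -, rfl⟩ := hz
    exact Bsmul t z0
  have hOsum : ∑ z ∈ O, H z = (ord : ℝ) * H z0 := by
    rw [Finset.sum_congr rfl hconst, Finset.sum_const, hcardO, nsmul_eq_mul]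
  have hOabs : ∑ z ∈ O, |H z| = (ord : ℝ) * M := by
    rw [Finset.sum_congr rfl (fun z hz => by rw [hconst z hz]), Finset.sum_const, hcardO,
      nsmul_eq_mul, hM]
  have hcompl : (ord : ℝ) * M ≤ ∑ z ∈ Oᶜ, |H z| := by
    have h1 : ∑ z ∈ O, H z + ∑ z ∈ Oᶜ, H z = 0 := by
      rw [Finset.sum_add_sum_compl, hS]
    have h2 : |∑ z ∈ Oᶜ, H z| = (ord : ℝ) * M := by
      have : ∑ z ∈ Oᶜ, H z = -((ord : ℝ) * H z0) := by rw [← hOsum]; linarith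
      rw [this, abs_neg, abs_mul, Nat.abs_cast, ← hM]
    calc (ord : ℝ) * M = |∑ z ∈ Oᶜ, H z| := h2.symm
      _ ≤ ∑ z ∈ Oᶜ, |H z| := Finset.abs_sum_le_sum_abs _ _
  have hT : 2 * (ord : ℝ) * M ≤ ∑ z : ZMod n, |H z| := by
    have := Finset.sum_add_sum_compl O (fun z => |H z|)
    rw [hOabs] at this
    linarith
  -- transfer sums from ZMod n to Fin n
  have ebij : Function.Bijective (fun j : Fin n => ((j : ℕ) : ZMod n)) := by
    rw [Fintype.bijective_iff_injective_and_card]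
    constructor
    · intro a b hab
      have : ((a : ℕ) : ZMod n).val = ((b : ℕ) : ZMod n).val := congrArg ZMod.val hab
      rw [ZMod.val_natCast, ZMod.val_natCast, Nat.mod_eq_of_lt a.isLt,
        Nat.mod_eq_of_lt b.isLt] at this
      exact Fin.ext this
    · simp [ZMod.card]
  have habs_sum : ∑ j : Fin n, |h j| = ∑ z : ZMod n, |H z| :=
    Fintype.sum_bijective _ ebij (fun j => |h j|) (fun z => |H z|)
      (fun j => by show |h j| = |H ((j : ℕ) : ZMod n)|; rw [hHj j])
  -- support
  set s : Finset (Fin n) := Finset.univ.filter (fun j => x j ≠ 0) with hs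
  have hsM : ∑ j ∈ s, |h j| ≤ (s.card : ℝ) * M := by
    have := Finset.sum_le_card_nsmul s (fun j => |h j|) M
      (fun j _ => by show |h j| ≤ M; rw [← hHj j]; exact hz0 _ (Finset.mem_univ _))
    rwa [nsmul_eq_mul] at this
  -- pointwise inequality
  have hpt : ∀ j : Fin n,
      |x j| + |h j| + (if x j ≠ 0 then (-2) * |h j| else 0) ≤ |x' j| := by
    intro j
    by_cases hxj : x j = 0
    · have hhe : h j = x' j := by rw [hh]; simp [hxj]
      rw [hxj, if_neg (by simp), hhe]
      simp
    · rw [if_pos hxj]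
      have h1 : |x j| - |x' j| ≤ |x j - x' j| := abs_sub_abs_le_abs_sub _ _
      have h2 : |x j - x' j| = |h j| := by
        rw [hh, abs_sub_comm]
      linarith
  have hsum_pt : ∑ j : Fin n, (|x j| + |h j| + (if x j ≠ 0 then (-2) * |h j| else 0))
      ≤ ∑ j : Fin n, |x' j| :=
    Finset.sum_le_sum (fun j _ => hpt j)
  have hsplit : ∑ j : Fin n, (|x j| + |h j| + (if x j ≠ 0 then (-2) * |h j| else 0))
      = ∑ j : Fin n, |x j| + ∑ j : Fin n, |h j| - 2 * ∑ j ∈ s, |h j| := by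
    rw [Finset.sum_add_distrib, Finset.sum_add_distrib]
    have e2 : ∑ j : Fin n, (if x j ≠ 0 then (-2) * |h j| else 0)
        = -2 * ∑ j ∈ s, |h j| := by
      calc ∑ j : Fin n, (if x j ≠ 0 then (-2) * |h j| else 0)
          = ∑ j ∈ s, (-2) * |h j| := (Finset.sum_filter _ _).symm
        _ = -2 * ∑ j ∈ s, |h j| := by rw [Finset.mul_sum]
    rw [e2]
    ring
  -- final count
  have hcard_lt : (s.card : ℝ) + 1 ≤ (ord : ℝ) := by
    have : s.card + 1 ≤ ord := le_trans hsupp hord_ge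
    exact_mod_cast this
  have hfinal : ∑ j : Fin n, |x j| + 2 * M ≤ ∑ j : Fin n, |x' j| := by
    have e1 : ∑ j : Fin n, |h j| ≥ 2 * (ord : ℝ) * M := by rw [habs_sum]; exact hT
    have e2 : 2 * (s.card : ℝ) * M + 2 * M ≤ 2 * (ord : ℝ) * M := by nlinarith
    have e3 : 2 * ∑ j ∈ s, |h j| ≤ 2 * (s.card : ℝ) * M := by linarith
    linarith [hsum_pt, hsplit.symm.le, hsplit.le]
  linarith
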